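/- Let n be a natural number, and let σ and σ' be two pair partitions of Fin (2*n). Then the join σ ⊔ σ' in the lattice of finpartitions of Fin (2*n) has exactly n parts if and only if σ = σ'. -/

import Mathlib

open Finset

/-- The setoid on `Fin N` induced by a finpartition of `univ : Finset (Fin N)`:
two elements are related iff they lie in a common part. -/
def Finpartition.toSetoidFin {N : ℕ} (σ : Finpartition (univ : Finset (Fin N))) :
    Setoid (Fin N) where
  r a b := ∃ s ∈ σ.parts, a ∈ s ∧ b ∈ s
  iseqv :=
    { refl := fun a => by
        obtain ⟨s, hs, ha⟩ := σ.exists_mem (mem_univ a)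
        exact ⟨s, hs, ha, ha⟩
      symm := fun h => by
        obtain ⟨s, hs, ha, hb⟩ := h
        exact ⟨s, hs, hb, ha⟩
      trans := fun h h' => by
        obtain ⟨s, hs, ha, hb⟩ := h
        obtain ⟨t, ht, hb', hc⟩ := h'
        obtain rfl := σ.eq_of_mem_parts hs ht hb hb'
        exact ⟨s, hs, ha, hc⟩ }

/-- The join `σ ⊔ τ` of two finpartitions of `univ : Finset (Fin N)` in the lattice of
finpartitions under the refinement order: its parts are the equivalence classes of the
join of the associated setoids. -/
noncomputable def Finpartition.finJoin {N : ℕ}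
    (σ τ : Finpartition (univ : Finset (Fin N))) :
    Finpartition (univ : Finset (Fin N)) :=
  letI : DecidableRel (σ.toSetoidFin ⊔ τ.toSetoidFin).r := Classical.decRel _
  Finpartition.ofSetoid (σ.toSetoidFin ⊔ τ.toSetoidFin)

/-- A pair partition: a finpartition all of whose parts have exactly two elements. -/
def IsPairPartition {N : ℕ} (σ : Finpartition (univ : Finset (Fin N))) : Prop :=
  ∀ s ∈ σ.parts, s.card = 2

instance {N : ℕ} : DecidablePred (IsPairPartition (N := N)) := fun σ =>
  decidable_of_iff (∀ s ∈ σ.parts, s.card = 2) Iff.rfl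

/-- `k : Fin d → Fin m` respects a finpartition `σ` if it is constant on every part. -/
def Respects {d m : ℕ} (k : Fin d → Fin m)
    (σ : Finpartition (univ : Finset (Fin d))) : Prop :=
  ∀ s ∈ σ.parts, ∀ a ∈ s, ∀ b ∈ s, k a = k b

instance {d m : ℕ} (k : Fin d → Fin m) : DecidablePred (Respects k) := fun σ =>
  decidable_of_iff (∀ s ∈ σ.parts, ∀ a ∈ s, ∀ b ∈ s, k a = k b) Iff.rfl

/-- The number of crossings of a pair partition: the number of (ordered, hence each counted
once) pairs of parts `{a,b}`, `{c,d}` with `a < c < b < d`. -/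
def crossings {N : ℕ} (σ : Finpartition (univ : Finset (Fin N))) : ℕ :=
  ((σ.parts ×ˢ σ.parts).filter fun st =>
    ∃ a ∈ st.1, ∃ b ∈ st.1, ∃ c ∈ st.2, ∃ d ∈ st.2, a < c ∧ c < b ∧ b < d).card

/-- The product `∏ c r t` over the parts `{r, t}` (with `r < t`) of a pair partition. -/
def pairProd {N : ℕ} (σ : Finpartition (univ : Finset (Fin N)))
    (c : Fin N → Fin N → ℂ) : ℂ :=
  ∏ s ∈ σ.parts, if h : s.Nonempty then c (s.min' h) (s.max' h) else 1

section Aux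
variable {N : ℕ}

lemma Finpartition.rel_toSetoidFin_iff (σ : Finpartition (univ : Finset (Fin N)))
    {a b : Fin N} : σ.toSetoidFin.r a b ↔ b ∈ σ.part a := by
  constructor
  · rintro ⟨s, hs, ha, hb⟩
    rwa [σ.part_eq_of_mem hs ha]
  · intro hb
    exact ⟨σ.part a, σ.part_mem.2 (mem_univ a), σ.mem_part (mem_univ a), hb⟩

lemma Finpartition.mem_part_finJoin_iff (σ τ : Finpartition (univ : Finset (Fin N)))
    {a b : Fin N} : b ∈ (σ.finJoin τ).part a ↔ (σ.toSetoidFin ⊔ τ.toSetoidFin).r a b := by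
  unfold Finpartition.finJoin
  letI : DecidableRel (σ.toSetoidFin ⊔ τ.toSetoidFin).r := Classical.decRel _
  exact Finpartition.mem_part_ofSetoid_iff_rel

lemma Finpartition.part_subset_finJoin_left (σ τ : Finpartition (univ : Finset (Fin N)))
    (a : Fin N) : σ.part a ⊆ (σ.finJoin τ).part a := by
  intro b hb
  rw [Finpartition.mem_part_finJoin_iff]
  exact le_sup_left (α := Setoid (Fin N)) ((σ.rel_toSetoidFin_iff).2 hb)

lemma Finpartition.part_subset_finJoin_right (σ τ : Finpartition (univ : Finset (Fin N)))
    (a : Fin N) : τ.part a ⊆ (σ.finJoin τ).part a := by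
  intro b hb
  rw [Finpartition.mem_part_finJoin_iff]
  exact le_sup_right (α := Setoid (Fin N)) ((τ.rel_toSetoidFin_iff).2 hb)

lemma Finpartition.eq_of_part_eq {P Q : Finpartition (univ : Finset (Fin N))}
    (h : ∀ a, P.part a = Q.part a) : P = Q := by
  ext t
  constructor
  · intro ht
    obtain ⟨a, ha⟩ := P.nonempty_of_mem_parts ht
    rw [← P.part_eq_of_mem ht ha, h a]
    exact Q.part_mem.2 (mem_univ a)
  · intro ht
    obtain ⟨a, ha⟩ := Q.nonempty_of_mem_parts ht
    rw [← Q.part_eq_of_mem ht ha, ← h a]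
    exact P.part_mem.2 (mem_univ a)

lemma IsPairPartition.card_parts {n : ℕ} {σ : Finpartition (univ : Finset (Fin (2 * n)))}
    (hσ : IsPairPartition σ) : σ.parts.card = n := by
  have h1 : ∑ s ∈ σ.parts, s.card = 2 * n := by
    rw [σ.sum_card_parts, card_univ, Fintype.card_fin]
  have h2 : ∑ s ∈ σ.parts, s.card = 2 * σ.parts.card := by
    rw [Finset.sum_congr rfl hσ, Finset.sum_const, smul_eq_mul, mul_comm]
  omega

end Aux

/-- the join of two pair partitions of `Fin (2*n)` has exactly `n` parts
iff the two pair partitions are equal. -/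
theorem card_parts_finJoin_eq_iff (n : ℕ)
    (σ σ' : Finpartition (univ : Finset (Fin (2 * n))))
    (hσ : IsPairPartition σ) (hσ' : IsPairPartition σ') :
    (σ.finJoin σ').parts.card = n ↔ σ = σ' := by

  constructor
  · intro h
    set J := σ.finJoin σ' with hJ
    have hsum : ∑ t ∈ J.parts, t.card = 2 * n := by
      rw [J.sum_card_parts, card_univ, Fintype.card_fin]
    have hge : ∀ t ∈ J.parts, 2 ≤ t.card := by
      intro t ht
      obtain ⟨a, ha⟩ := J.nonempty_of_mem_parts ht
      have hsub : σ.part a ⊆ t := by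
        rw [← J.part_eq_of_mem ht ha]
        exact σ.part_subset_finJoin_left σ' a
      have := hσ _ (σ.part_mem.2 (mem_univ a))
      calc 2 = (σ.part a).card := this.symm
        _ ≤ t.card := Finset.card_le_card hsub
    have hcard2 : ∀ t ∈ J.parts, t.card = 2 := by
      by_contra hc
      push_neg at hc
      obtain ⟨t0, ht0, ht0'⟩ := hc
      have : ∑ t ∈ J.parts, 2 < ∑ t ∈ J.parts, t.card :=
        Finset.sum_lt_sum hge ⟨t0, ht0, lt_of_le_of_ne (hge t0 ht0) (Ne.symm ht0')⟩
      rw [Finset.sum_const, smul_eq_mul, h, hsum] at this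
      omega
    have key : ∀ (τ : Finpartition (univ : Finset (Fin (2 * n)))),
        IsPairPartition τ → (∀ a, τ.part a ⊆ J.part a) → ∀ a, τ.part a = J.part a := by
      intro τ hτ hsub a
      refine Finset.eq_of_subset_of_card_le (hsub a) ?_
      rw [hcard2 _ (J.part_mem.2 (mem_univ a)), hτ _ (τ.part_mem.2 (mem_univ a))]
    have h1 := key σ hσ (fun a => σ.part_subset_finJoin_left σ' a)
    have h2 := key σ' hσ' (fun a => σ.part_subset_finJoin_right σ' a)
    exact Finpartition.eq_of_part_eq (fun a => (h1 a).trans (h2 a).symm)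
  · rintro rfl
    have hJ : σ.finJoin σ = σ := by
      refine Finpartition.eq_of_part_eq (fun a => ?_)
      apply Finset.Subset.antisymm
      · intro b hb
        rw [Finpartition.mem_part_finJoin_iff, sup_idem] at hb
        exact (σ.rel_toSetoidFin_iff).1 hb
      · exact σ.part_subset_finJoin_left σ a
    rw [hJ]
    exact hσ.card_parts
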